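/- Let h : X → Y satisfy ‖h(2x) − 16h(x)‖ ≤ ψ(x) for all x ∈ X, where ψ : X → [0,∞) satisfies Σ_{i=1}^∞ 16^i ψ(x/2^i) < ∞ and lim_{m→∞} 16^m ψ(x/2^m) = 0 for all x. Then the limit T(x) = lim_{m→∞} 16^m h(x/2^m) exists for every x ∈ X and satisfies T(2x) = 16T(x) and ‖h(x) − T(x)‖ ≤ Σ_{i=1}^∞ 16^{i−1} ψ(x/2^i) for all x ∈ X. -/

import Mathlib

theorem stmt_12 {X Y : Type*} [AddCommGroup X] [Module ℝ X]
    [NormedAddCommGroup Y] [NormedSpace ℝ Y] [CompleteSpace Y]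
    (h : X → Y) (ψ : X → ℝ) (hψ : ∀ x : X, 0 ≤ ψ x)
    (hbound : ∀ x : X, ‖h ((2 : ℤ) • x) - (16 : ℤ) • h x‖ ≤ ψ x)
    (hsum : ∀ x : X, Summable (fun i : ℕ => (16 : ℝ) ^ (i + 1) * ψ (((1 : ℝ) / 2 ^ (i + 1)) • x)))
    (hlim : ∀ x : X,
      Filter.Tendsto (fun m : ℕ => (16 : ℝ) ^ m * ψ (((1 : ℝ) / 2 ^ m) • x))
        Filter.atTop (nhds 0)) :
    ∃ T : X → Y,
      (∀ x : X, Filter.Tendsto (fun m : ℕ => (16 : ℝ) ^ m • h (((1 : ℝ) / 2 ^ m) • x))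
        Filter.atTop (nhds (T x))) ∧
      (∀ x : X, T ((2 : ℤ) • x) = (16 : ℤ) • T x) ∧
      (∀ x : X, ‖h x - T x‖ ≤ ∑' i : ℕ, (16 : ℝ) ^ i * ψ (((1 : ℝ) / 2 ^ (i + 1)) • x)) := by
  classical
  set f : X → ℕ → Y := fun x m => (16 : ℝ) ^ m • h (((1 : ℝ) / 2 ^ m) • x) with hf
  set g : X → ℕ → ℝ := fun x i => (16 : ℝ) ^ i * ψ (((1 : ℝ) / 2 ^ (i + 1)) • x) with hg
  have hgsum : ∀ x, Summable (g x) := by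
    intro x
    have := (hsum x).div_const 16
    refine this.congr fun i => ?_
    simp only [hg, pow_succ]
    ring
  have key : ∀ x (i : ℕ), ‖f x (i + 1) - f x i‖ ≤ g x i := by
    intro x i
    have h2 : (2 : ℤ) • (((1 : ℝ) / 2 ^ (i + 1)) • x) = ((1 : ℝ) / 2 ^ i) • x := by
      rw [← Int.cast_smul_eq_zsmul ℝ, smul_smul]
      congr 1
      push_cast
      rw [pow_succ]
      field_simp
    have hb := hbound (((1 : ℝ) / 2 ^ (i + 1)) • x)
    rw [h2, ← Int.cast_smul_eq_zsmul ℝ] at hb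
    have eq1 : f x (i + 1) - f x i
        = (16 : ℝ) ^ i • (((16 : ℤ) : ℝ) • h (((1 : ℝ) / 2 ^ (i + 1)) • x)
            - h (((1 : ℝ) / 2 ^ i) • x)) := by
      simp only [hf, smul_sub, smul_smul, ← pow_succ]
      push_cast
      ring_nf
    rw [eq1, norm_smul, norm_sub_rev]
    calc ‖(16 : ℝ) ^ i‖ * ‖h (((1 : ℝ) / 2 ^ i) • x) - ((16 : ℤ) : ℝ) • h (((1 : ℝ) / 2 ^ (i + 1)) • x)‖
        ≤ (16 : ℝ) ^ i * ψ (((1 : ℝ) / 2 ^ (i + 1)) • x) := by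
          rw [norm_pow, Real.norm_ofNat]
          exact mul_le_mul_of_nonneg_left hb (by positivity)
      _ = g x i := rfl
  have hdsum : ∀ x, Summable (fun i => f x (i + 1) - f x i) := fun x =>
    Summable.of_norm_bounded (hgsum x) (key x)
  have hf0 : ∀ x, f x 0 = h x := by intro x; simp [hf]
  refine ⟨fun x => f x 0 + ∑' i, (f x (i + 1) - f x i), ?_, ?_, ?_⟩
  · intro x
    have hten := (hdsum x).hasSum.tendsto_sum_nat
    have hps : ∀ n, ∑ i ∈ Finset.range n, (f x (i + 1) - f x i) = f x n - f x 0 :=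
      fun n => Finset.sum_range_sub (f x) n
    have : Filter.Tendsto (fun n => f x 0 + (f x n - f x 0)) Filter.atTop
        (nhds (f x 0 + ∑' i, (f x (i + 1) - f x i))) := by
      refine Filter.Tendsto.const_add _ ?_
      simpa only [hps] using hten
    have heq : (fun n => f x 0 + (f x n - f x 0)) = fun n => f x n := by
      funext n; abel
    rw [heq] at this
    exact this
  · intro x
    have hTx : Filter.Tendsto (fun m => f x m) Filter.atTop
        (nhds (f x 0 + ∑' i, (f x (i + 1) - f x i))) := by
      have hten := (hdsum x).hasSum.tendsto_sum_nat
      have hps : ∀ n, ∑ i ∈ Finset.range n, (f x (i + 1) - f x i) = f x n - f x 0 :=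
        fun n => Finset.sum_range_sub (f x) n
      have := (Filter.Tendsto.const_add (f x 0) (by simpa only [hps] using hten :
        Filter.Tendsto (fun n => f x n - f x 0) Filter.atTop
          (nhds (∑' i, (f x (i + 1) - f x i)))))
      simpa using this
    have hT2 : Filter.Tendsto (fun m => f ((2 : ℤ) • x) m) Filter.atTop
        (nhds (f ((2 : ℤ) • x) 0 + ∑' i, (f ((2 : ℤ) • x) (i + 1) - f ((2 : ℤ) • x) i))) := by
      have hten := (hdsum ((2 : ℤ) • x)).hasSum.tendsto_sum_nat
      have hps : ∀ n, ∑ i ∈ Finset.range n,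
          (f ((2 : ℤ) • x) (i + 1) - f ((2 : ℤ) • x) i) = f ((2 : ℤ) • x) n - f ((2 : ℤ) • x) 0 :=
        fun n => Finset.sum_range_sub _ n
      have := (Filter.Tendsto.const_add (f ((2 : ℤ) • x) 0) (by simpa only [hps] using hten :
        Filter.Tendsto (fun n => f ((2 : ℤ) • x) n - f ((2 : ℤ) • x) 0) Filter.atTop
          (nhds (∑' i, (f ((2 : ℤ) • x) (i + 1) - f ((2 : ℤ) • x) i)))))
      simpa using this
    have hshift : ∀ m : ℕ, f ((2 : ℤ) • x) (m + 1) = (16 : ℝ) • f x m := by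
      intro m
      have harg : ((1 : ℝ) / 2 ^ (m + 1)) • ((2 : ℤ) • x) = ((1 : ℝ) / 2 ^ m) • x := by
        rw [← Int.cast_smul_eq_zsmul ℝ, smul_smul]
        congr 1
        push_cast
        rw [pow_succ]
        field_simp
      simp only [hf, harg, smul_smul, ← pow_succ']
    have hT2' : Filter.Tendsto (fun m => f ((2 : ℤ) • x) m) Filter.atTop
        (nhds ((16 : ℝ) • (f x 0 + ∑' i, (f x (i + 1) - f x i)))) := by
      rw [← Filter.tendsto_add_atTop_iff_nat 1]
      simp only [hshift]
      exact hTx.const_smul (16 : ℝ)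
    have := tendsto_nhds_unique hT2 hT2'
    show f ((2 : ℤ) • x) 0 + ∑' i, (f ((2 : ℤ) • x) (i + 1) - f ((2 : ℤ) • x) i)
        = (16 : ℤ) • (f x 0 + ∑' i, (f x (i + 1) - f x i))
    rw [this, ← Int.cast_smul_eq_zsmul ℝ]
    norm_num
  · intro x
    have hnorm : ‖h x - (f x 0 + ∑' i, (f x (i + 1) - f x i))‖
        = ‖∑' i, (f x (i + 1) - f x i)‖ := by
      rw [hf0]
      simp [norm_sub_rev]
    rw [hnorm]
    have hns : Summable (fun i => ‖f x (i + 1) - f x i‖) :=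
      Summable.of_nonneg_of_le (fun i => norm_nonneg _) (key x) (hgsum x)
    calc ‖∑' i, (f x (i + 1) - f x i)‖ ≤ ∑' i, ‖f x (i + 1) - f x i‖ :=
          norm_tsum_le_tsum_norm hns
      _ ≤ ∑' i, g x i := Summable.tsum_le_tsum (key x) hns (hgsum x)
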